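/- Let H be a complex Hilbert space and K a unitary bounded operator on H. If the inner automorphism ρ(O) := K∘O∘K* of B(H) is B(H)-regular, i.e. K∘O*∘K* = K*∘O*∘K for every bounded operator O on H, then there exists a real number θ such that K = exp(iθ) • K*. -/

import Mathlib

open ContinuousLinearMap

local notation "⟪" x ", " y "⟫" => @inner ℂ _ _ x y

/-- If the inner automorphism `ρ(O) = K ∘ O ∘ K*` implemented by a unitary `K`
on a complex Hilbert space is `B(H)`-regular, i.e. `K ∘ O* ∘ K* = K* ∘ O* ∘ K` for every bounded
operator `O`, then `K = exp(iθ) • K*` for some real `θ`. -/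
theorem exists_phase_of_regular
    {H : Type*} [NormedAddCommGroup H] [InnerProductSpace ℂ H] [CompleteSpace H]
    (K : H →L[ℂ] H)
    (hK1 : K ∘L adjoint K = 1) (hK2 : adjoint K ∘L K = 1)
    (hreg : ∀ O : H →L[ℂ] H,
      K ∘L adjoint O ∘L adjoint K = adjoint K ∘L adjoint O ∘L K) :
    ∃ θ : ℝ, K = Complex.exp (θ * Complex.I) • adjoint K := by
  have hA : ∀ A : H →L[ℂ] H, K ∘L A ∘L adjoint K = adjoint K ∘L A ∘L K := by
    intro A
    simpa using hreg (adjoint A)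
  have hKK' : ∀ x, adjoint K (K x) = x := by
    intro x
    have := ContinuousLinearMap.ext_iff.mp hK2 x
    simpa using this
  have hK'K : ∀ x, K (adjoint K x) = x := by
    intro x
    have := ContinuousLinearMap.ext_iff.mp hK1 x
    simpa using this
  have hcomm : ∀ (A : H →L[ℂ] H) (x : H), K (K (A x)) = A (K (K x)) := by
    intro A x
    have h := ContinuousLinearMap.ext_iff.mp (hA A) (K x)
    simp only [comp_apply, hKK'] at h
    have h2 := congrArg K h
    rw [hK'K] at h2
    exact h2
  -- key identity from rank-one operators
  have key : ∀ y z x : H, ⟪y, z⟫ • K (K x) = ⟪y, K (K z)⟫ • x := by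
    intro y z x
    have h := hcomm ((innerSL ℂ y).smulRight x) z
    simpa [ContinuousLinearMap.smulRight_apply, innerSL_apply_apply, map_smul] using h
  rcases subsingleton_or_nontrivial H with hsub | hnt
  · exact ⟨0, Subsingleton.elim _ _⟩
  · obtain ⟨x₀, hx₀⟩ := exists_ne (0 : H)
    have hinner : ⟪x₀, x₀⟫ ≠ 0 := by
      simpa [inner_self_eq_zero] using hx₀
    have hTex : ∃ c : ℂ, ∀ x, K (K x) = c • x := by
      refine ⟨⟪x₀, x₀⟫⁻¹ * ⟪x₀, K (K x₀)⟫, fun x => ?_⟩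
      have h := key x₀ x₀ x
      have h2 := congrArg (fun v => (⟪x₀, x₀⟫⁻¹ : ℂ) • v) h
      simp only [smul_smul, inv_mul_cancel₀ hinner, one_smul] at h2
      exact h2
    obtain ⟨c, hTx⟩ := hTex
    -- K x = c • adjoint K x
    have hKc : ∀ x, K x = c • adjoint K x := by
      intro x
      have h := hTx (adjoint K x)
      rw [hK'K] at h
      exact h
    -- norm-preserving: ⟪K x, K x⟫ = ⟪x, x⟫
    have hiso : ∀ x : H, ⟪K x, K x⟫ = ⟪x, x⟫ := by
      intro x
      have := adjoint_inner_left K x (K x)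
      rw [hKK'] at this
      exact this.symm
    -- conj c * c = 1
    have hcc : (starRingEnd ℂ) c * c = 1 := by
      have h2 : ((starRingEnd ℂ) c * c) * ⟪x₀, x₀⟫ = 1 * ⟪x₀, x₀⟫ := by
        calc ((starRingEnd ℂ) c * c) * ⟪x₀, x₀⟫ = ⟪c • x₀, c • x₀⟫ := by
              rw [inner_smul_left, inner_smul_right]; ring
          _ = ⟪K (K x₀), K (K x₀)⟫ := by rw [hTx x₀]
          _ = ⟪x₀, x₀⟫ := by rw [hiso, hiso]
          _ = 1 * ⟪x₀, x₀⟫ := (one_mul _).symm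
      exact mul_right_cancel₀ hinner h2
    have hnsq : Complex.normSq c = 1 := by
      have := Complex.normSq_eq_conj_mul_self (z := c)
      rw [hcc] at this
      exact_mod_cast this
    have habs : ‖c‖ = 1 := by
      rw [Complex.norm_def, hnsq, Real.sqrt_one]
    refine ⟨c.arg, ?_⟩
    have hexp : Complex.exp (c.arg * Complex.I) = c := by
      have h := Complex.norm_mul_exp_arg_mul_I c
      rw [habs] at h
      simpa using h
    ext x
    rw [hexp]
    simpa using hKc x
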